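/- Let g : 𝒳 → 𝒴 be surjective, Y_k = g(X_k), R := PW (R_{x→y} = Σ_{x' : g(x') = y} P_{x→x'}), and Q the transition matrix of the best Markov approximation of Y (Q_{y→y'} = P(Y_2 = y' | Y_1 = y)). Then for every x ∈ 𝒳 and every subset B ⊆ 𝒴: | Σ_{y∈B} ( R_{x→y} − Q_{g(x)→y} ) | ≤ sqrt( ln(2) · C_L(X,g) / ( 2 · min_{x'∈𝒳} μ_{x'} ) ). -/

import Mathlib

open Filter Real

/-- Shannon entropy (base 2) of a finitely supported probability mass function. -/
noncomputable def ent {A : Type} [Fintype A] (q : A → ℝ) : ℝ :=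
  - ∑ a, q a * Real.logb 2 (q a)

/-- Joint law of the first `n+1` samples of a Markov chain with initial distribution `μ`
and transition matrix `P`. -/
noncomputable def chainJoint {X : Type} (μ : X → ℝ) (P : X → X → ℝ) (n : ℕ)
    (x : Fin (n + 1) → X) : ℝ :=
  μ (x 0) * ∏ i : Fin n, P (x i.castSucc) (x i.succ)

/-- Joint law of `(Y_1, …, Y_{n+1})`, where `Y` is the stationary process obtained by
observing the stationary Markov chain `X ~ (μ, P)` through the channel `W`. -/
noncomputable def obsJoint {X Y : Type} [Fintype X] (μ : X → ℝ) (P : X → X → ℝ)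
    (W : X → Y → ℝ) (n : ℕ) (y : Fin (n + 1) → Y) : ℝ :=
  ∑ x : Fin (n + 1) → X, chainJoint μ P n x * ∏ i, W (x i) (y i)

/-- A finite stochastic matrix is irreducible and aperiodic iff it is primitive, i.e., some
power (and hence all larger powers) of it is entrywise positive. -/
def IrreducibleAperiodic {X : Type} [Fintype X] [DecidableEq X] (P : Matrix X X ℝ) : Prop :=
  ∃ N : ℕ, ∀ n ≥ N, ∀ x x' : X, 0 < (P ^ n) x x'

section Defs

variable {X Y : Type} [Fintype X] [Fintype Y]

/-- Marginal distribution `ν` of each `Y_k`: `νᵀ = μᵀ W`. -/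
noncomputable def nuDist (μ : X → ℝ) (W : X → Y → ℝ) : Y → ℝ := fun y => ∑ x, μ x * W x y

/-- Joint distribution of `(Y_1, Y_2)`. -/
noncomputable def jointYY (μ : X → ℝ) (P : X → X → ℝ) (W : X → Y → ℝ) : Y × Y → ℝ :=
  fun p => ∑ x, ∑ x', μ x * W x p.1 * P x x' * W x' p.2

/-- Joint distribution of `(X_1, Y_2)`. -/
noncomputable def jointX1Y2 (μ : X → ℝ) (P : X → X → ℝ) (W : X → Y → ℝ) : X × Y → ℝ :=
  fun p => ∑ x', μ p.1 * P p.1 x' * W x' p.2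

/-- Joint distribution of `(X_2, Y_1)`. -/
noncomputable def jointX2Y1 (μ : X → ℝ) (P : X → X → ℝ) (W : X → Y → ℝ) : X × Y → ℝ :=
  fun p => ∑ x, μ x * W x p.2 * P x p.1

/-- Joint distribution of `(X_1, X_2)`. -/
noncomputable def jointXX (μ : X → ℝ) (P : X → X → ℝ) : X × X → ℝ :=
  fun p => μ p.1 * P p.1 p.2

/-- Joint distribution of `(X_1, Y_1)`. -/
noncomputable def jointX1Y1 (μ : X → ℝ) (W : X → Y → ℝ) : X × Y → ℝ :=
  fun p => μ p.1 * W p.1 p.2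

/-- Joint distribution of `(X_2, Y_2)`. -/
noncomputable def jointX2Y2 (μ : X → ℝ) (P : X → X → ℝ) (W : X → Y → ℝ) : X × Y → ℝ :=
  fun p => ∑ x, μ x * P x p.1 * W p.1 p.2

/-- Joint distribution of `(X_1, X_2, Y_2)`. -/
noncomputable def jointX1X2Y2 (μ : X → ℝ) (P : X → X → ℝ) (W : X → Y → ℝ) :
    X × X × Y → ℝ :=
  fun p => μ p.1 * P p.1 p.2.1 * W p.2.1 p.2.2

/-- Joint distribution of `(X_1, X_2, Y_1)`. -/
noncomputable def jointX1X2Y1 (μ : X → ℝ) (P : X → X → ℝ) (W : X → Y → ℝ) :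
    X × X × Y → ℝ :=
  fun p => μ p.1 * W p.1 p.2.2 * P p.1 p.2.1

/-- Joint distribution of `(X_1, Y_1, Y_2)`. -/
noncomputable def jointX1Y1Y2 (μ : X → ℝ) (P : X → X → ℝ) (W : X → Y → ℝ) :
    X × Y × Y → ℝ :=
  fun p => ∑ x', μ p.1 * W p.1 p.2.1 * P p.1 x' * W x' p.2.2

/-- Conditional entropy `H(Y_2 | Y_1) = H(Y_1, Y_2) − H(Y_1)`. -/
noncomputable def HY2gY1 (μ : X → ℝ) (P : X → X → ℝ) (W : X → Y → ℝ) : ℝ :=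
  ent (jointYY μ P W) - ent (nuDist μ W)

/-- Conditional entropy `H(Y_2 | X_1) = H(X_1, Y_2) − H(X_1)`. -/
noncomputable def HY2gX1 (μ : X → ℝ) (P : X → X → ℝ) (W : X → Y → ℝ) : ℝ :=
  ent (jointX1Y2 μ P W) - ent μ

/-- Conditional entropy `H(Y_1 | X_2) = H(X_2, Y_1) − H(X_2)`. -/
noncomputable def HY1gX2 (μ : X → ℝ) (P : X → X → ℝ) (W : X → Y → ℝ) : ℝ :=
  ent (jointX2Y1 μ P W) - ent μ

/-- Mutual information `I(X_1; X_2) = H(X_1) + H(X_2) − H(X_1, X_2)` (stationary case). -/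
noncomputable def IX1X2 (μ : X → ℝ) (P : X → X → ℝ) : ℝ :=
  2 * ent μ - ent (jointXX μ P)

/-- Mutual information `I(Y_1; Y_2) = H(Y_1) + H(Y_2) − H(Y_1, Y_2)` (stationary case). -/
noncomputable def IY1Y2 (μ : X → ℝ) (P : X → X → ℝ) (W : X → Y → ℝ) : ℝ :=
  2 * ent (nuDist μ W) - ent (jointYY μ P W)

/-- The lumpability cost `C_L(X, W) = H(Y_2|Y_1) − H(Y_2|X_1)`. -/
noncomputable def CL (μ : X → ℝ) (P : X → X → ℝ) (W : X → Y → ℝ) : ℝ :=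
  HY2gY1 μ P W - HY2gX1 μ P W

/-- The predictability cost `C_P(X, W) = I(X_1;X_2) − I(Y_1;Y_2)`. -/
noncomputable def CP (μ : X → ℝ) (P : X → X → ℝ) (W : X → Y → ℝ) : ℝ :=
  IX1X2 μ P - IY1Y2 μ P W

/-- The aggregation cost `C_β(X, W) = (1−2β)·C_L(X,W) + β·C_P(X,W)`. -/
noncomputable def Cbeta (μ : X → ℝ) (P : X → X → ℝ) (W : X → Y → ℝ) (β : ℝ) : ℝ :=
  (1 - 2 * β) * CL μ P W + β * CP μ P W

/-- `δ_β(X,W) = (1−β)·(H(Y_2|Y_1) − H̄(Y)) + β·(I(X_1;X_2) − H(Y_1) + H̄(Y))`, where `hbarY`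
denotes the entropy rate `H̄(Y)`. -/
noncomputable def deltaBeta (μ : X → ℝ) (P : X → X → ℝ) (W : X → Y → ℝ)
    (hbarY β : ℝ) : ℝ :=
  (1 - β) * (HY2gY1 μ P W - hbarY) + β * (IX1X2 μ P - ent (nuDist μ W) + hbarY)

/-- Conditional mutual information
`I(X_1; X_2 | Y_2) = H(X_1,Y_2) + H(X_2,Y_2) − H(X_1,X_2,Y_2) − H(Y_2)`. -/
noncomputable def IX1X2gY2 (μ : X → ℝ) (P : X → X → ℝ) (W : X → Y → ℝ) : ℝ :=
  ent (jointX1Y2 μ P W) + ent (jointX2Y2 μ P W) - ent (jointX1X2Y2 μ P W) -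
    ent (nuDist μ W)

/-- Conditional mutual information
`I(X_2; X_1 | Y_1) = H(X_1,Y_1) + H(X_2,Y_1) − H(X_1,X_2,Y_1) − H(Y_1)`. -/
noncomputable def IX2X1gY1 (μ : X → ℝ) (P : X → X → ℝ) (W : X → Y → ℝ) : ℝ :=
  ent (jointX1Y1 μ W) + ent (jointX2Y1 μ P W) - ent (jointX1X2Y1 μ P W) -
    ent (nuDist μ W)

/-- Conditional mutual information
`I(Y_2; X_1 | Y_1) = H(X_1,Y_1) + H(Y_1,Y_2) − H(X_1,Y_1,Y_2) − H(Y_1)`. -/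
noncomputable def IY2X1gY1 (μ : X → ℝ) (P : X → X → ℝ) (W : X → Y → ℝ) : ℝ :=
  ent (jointX1Y1 μ W) + ent (jointYY μ P W) - ent (jointX1Y1Y2 μ P W) -
    ent (nuDist μ W)

/-- Mutual information `I(X_2; Y_1) = H(X_2) + H(Y_1) − H(X_2, Y_1)`. -/
noncomputable def IX2Y1 (μ : X → ℝ) (P : X → X → ℝ) (W : X → Y → ℝ) : ℝ :=
  ent μ + ent (nuDist μ W) - ent (jointX2Y1 μ P W)

/-- The deterministic channel induced by an aggregation function `g : X → Y`:
`W_{x→y} = 1` iff `y = g x`. -/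
noncomputable def detW [DecidableEq Y] (g : X → Y) : X → Y → ℝ :=
  fun x y => if g x = y then 1 else 0

/-- The row-stochastic matrix `R = P·W` for a deterministic aggregation `g`:
`R_{x→y} = ∑_{x' : g x' = y} P_{x→x'}`. -/
noncomputable def Rmat [DecidableEq Y] (P : X → X → ℝ) (g : X → Y) : X → Y → ℝ :=
  fun x y => ∑ x', if g x' = y then P x x' else 0

/-- Kullback–Leibler divergence (base 2) between two probability mass functions on `Y`. -/
noncomputable def klDiv2 (p q : Y → ℝ) : ℝ :=
  ∑ y, p y * Real.logb 2 (p y / q y)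

end Defs


section Aux

lemma pinsker_mono (a b : ℝ) (ha : 0 < a) (hab : a ≤ b) (hb : b < 1) :
    2*(a-b)^2 ≤ a*Real.log a - a*Real.log b + (1-a)*Real.log (1-a) - (1-a)*Real.log (1-b) := by
  set F : ℝ → ℝ := fun t => -(a*Real.log t) - (1-a)*Real.log (1-t) - 2*(a-t)^2 with hF
  have key : ∀ t ∈ Set.Ioo a b, HasDerivAt F (-(a*t⁻¹) + (1-a)*(1-t)⁻¹ + 4*(a-t)) t := by
    intro t ht
    have ht0 : 0 < t := lt_of_lt_of_le ha ht.1.le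
    have ht1 : t < 1 := lt_of_lt_of_le ht.2 hb.le
    have h1 : HasDerivAt (fun t => a * Real.log t) (a * t⁻¹) t :=
      (Real.hasDerivAt_log ht0.ne').const_mul a
    have h2i : HasDerivAt (fun t : ℝ => 1 - t) (-1) t := by
      simpa using (hasDerivAt_id t).const_sub 1
    have h2 : HasDerivAt (fun t => (1-a) * Real.log (1 - t)) ((1-a) * ((1-t)⁻¹ * (-1))) t :=
      (((Real.hasDerivAt_log (by intro h; nlinarith [sub_eq_zero.mp h])).comp t h2i)).const_mul (1-a)
    have h3i : HasDerivAt (fun t : ℝ => a - t) (-1) t := by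
      simpa using (hasDerivAt_id t).const_sub a
    have h3 : HasDerivAt (fun t : ℝ => 2*(a-t)^2) (2*((2:ℕ)*(a-t)^1*(-1))) t :=
      (h3i.pow 2).const_mul 2
    have := (h1.neg.sub h2).sub h3
    refine this.congr_deriv ?_
    push_cast
    ring
  have hderiv : ∀ t ∈ Set.Ioo a b, 0 ≤ deriv F t := by
    intro t ht
    rw [(key t ht).deriv]
    have ht0 : 0 < t := lt_of_lt_of_le ha ht.1.le
    have ht1 : t < 1 := lt_of_lt_of_le ht.2 hb.le
    have hden : (0:ℝ) < t*(1-t) := by nlinarith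
    have hne1 : t ≠ 0 := ht0.ne'
    have hne2 : (1:ℝ) - t ≠ 0 := by linarith
    have heq : -(a*t⁻¹) + (1-a)*(1-t)⁻¹ + 4*(a-t) = (t-a)*(1-2*t)^2/(t*(1-t)) := by
      rw [eq_div_iff hden.ne']
      field_simp
      ring
    rw [heq]
    apply div_nonneg (mul_nonneg (by linarith [ht.1.le]) (sq_nonneg _))
    positivity
  have hmono : MonotoneOn F (Set.Icc a b) := by
    apply monotoneOn_of_deriv_nonneg (convex_Icc a b)
    · have c1 : ContinuousOn (fun t : ℝ => Real.log t) (Set.Icc a b) :=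
        Real.continuousOn_log.mono (fun t ht => by
          simp only [Set.mem_compl_iff, Set.mem_singleton_iff]
          intro h; rw [h] at ht; exact absurd ht.1 (not_le.mpr ha))
      have c2 : ContinuousOn (fun t : ℝ => Real.log (1 - t)) (Set.Icc a b) := by
        apply Real.continuousOn_log.comp (continuousOn_const.sub continuousOn_id)
        intro t ht
        simp only [Set.mem_compl_iff, Set.mem_singleton_iff, id]
        intro h
        have : t = 1 := by simp only [Pi.sub_apply, id] at h; linarith
        nlinarith [ht.2]
      exact ((continuousOn_const.mul c1).neg.sub (continuousOn_const.mul c2)).sub (by fun_prop)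
    · intro t ht
      rw [interior_Icc] at ht
      exact (key t ht).differentiableAt.differentiableWithinAt
    · intro t ht
      rw [interior_Icc] at ht
      exact hderiv t ht
  have := hmono (Set.left_mem_Icc.mpr hab) (Set.right_mem_Icc.mpr hab) hab
  simp only [hF] at this
  nlinarith [this]

lemma pinsker_zero (b : ℝ) (hb0 : 0 ≤ b) (hb : b < 1) : 2*b^2 ≤ -Real.log (1-b) := by
  set F : ℝ → ℝ := fun t => -Real.log (1-t) - 2*t^2 with hF
  have key : ∀ t ∈ Set.Ioo (0:ℝ) b, HasDerivAt F ((1-t)⁻¹ + (-(4*t))) t := by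
    intro t ht
    have ht1 : t < 1 := lt_of_lt_of_le ht.2 hb.le
    have h2i : HasDerivAt (fun t : ℝ => 1 - t) (-1) t := by
      simpa using (hasDerivAt_id t).const_sub 1
    have h2 : HasDerivAt (fun t => Real.log (1 - t)) ((1-t)⁻¹ * (-1)) t :=
      (Real.hasDerivAt_log (by intro h; nlinarith [sub_eq_zero.mp h])).comp t h2i
    have h3 : HasDerivAt (fun t : ℝ => 2*t^2) (2*((2:ℕ)*t^1*1)) t :=
      ((hasDerivAt_id t).pow 2).const_mul 2
    have := h2.neg.sub h3
    refine this.congr_deriv ?_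
    push_cast
    ring
  have hderiv : ∀ t ∈ Set.Ioo (0:ℝ) b, 0 ≤ deriv F t := by
    intro t ht
    rw [(key t ht).deriv]
    have ht1 : t < 1 := lt_of_lt_of_le ht.2 hb.le
    have ht0 : (0:ℝ) < 1 - t := by linarith
    have heq : (1-t)⁻¹ + (-(4*t)) = (1-2*t)^2/(1-t) := by
      rw [eq_div_iff ht0.ne']
      field_simp
      ring
    rw [heq]
    apply div_nonneg (sq_nonneg _) (by linarith)
  have hmono : MonotoneOn F (Set.Icc (0:ℝ) b) := by
    apply monotoneOn_of_deriv_nonneg (convex_Icc 0 b)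
    · have c2 : ContinuousOn (fun t : ℝ => Real.log (1 - t)) (Set.Icc (0:ℝ) b) := by
        apply Real.continuousOn_log.comp (continuousOn_const.sub continuousOn_id)
        intro t ht
        simp only [Set.mem_compl_iff, Set.mem_singleton_iff, id]
        intro h
        have : t = 1 := by simp only [Pi.sub_apply, id] at h; linarith
        nlinarith [ht.2]
      exact c2.neg.sub (by fun_prop)
    · intro t ht
      rw [interior_Icc] at ht
      exact (key t ht).differentiableAt.differentiableWithinAt
    · intro t ht
      rw [interior_Icc] at ht
      exact hderiv t ht
  have := hmono (Set.left_mem_Icc.mpr hb0) (Set.right_mem_Icc.mpr hb0) hb0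
  simp only [hF] at this
  norm_num at this
  linarith

lemma pinsker_binary (a b : ℝ) (ha0 : 0 ≤ a) (ha1 : a ≤ 1) (hb0 : 0 ≤ b) (hb1 : b ≤ 1)
    (h0 : b = 0 → a = 0) (h1 : b = 1 → a = 1) :
    2*(a-b)^2 ≤ a*Real.log a - a*Real.log b + (1-a)*Real.log (1-a) - (1-a)*Real.log (1-b) := by
  rcases eq_or_lt_of_le hb0 with hb0' | hb0'
  · have := h0 hb0'.symm; subst this; rw [← hb0']; simp
  rcases eq_or_lt_of_le hb1 with hb1' | hb1'
  · have := h1 hb1'; subst this; rw [hb1']; simp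
  rcases le_or_gt a b with hab | hab
  · rcases eq_or_lt_of_le ha0 with ha0' | ha0'
    · rw [← ha0']
      have := pinsker_zero b hb0 hb1'
      simp only [zero_mul, sub_zero, one_mul, Real.log_one, zero_sub, zero_add]
      nlinarith [this]
    · exact pinsker_mono a b ha0' hab hb1'
  · rcases eq_or_lt_of_le ha1 with ha1' | ha1'
    · subst ha1'
      have := pinsker_zero (1-b) (by linarith) (by linarith)
      have e2 : (1:ℝ) - (1-b) = b := by ring
      rw [e2] at this
      simp only [sub_self, zero_mul, one_mul, Real.log_one, mul_zero]
      nlinarith [this]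
    · have := pinsker_mono (1-a) (1-b) (by linarith) (by linarith) (by linarith)
      have e1 : (1:ℝ) - (1-a) = a := by ring
      have e2 : (1:ℝ) - (1-b) = b := by ring
      rw [e1, e2] at this
      nlinarith [this]

lemma log_ge_one_sub_inv {x : ℝ} (hx : 0 < x) : 1 - x⁻¹ ≤ Real.log x := by
  have h := Real.log_le_sub_one_of_pos (x := x⁻¹) (by positivity)
  rw [Real.log_inv] at h
  linarith

lemma mul_log_div_eq (a b : ℝ) (h : a ≠ 0 → b ≠ 0) :
    a * Real.log (a / b) = a * Real.log a - a * Real.log b := by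
  rcases eq_or_ne a 0 with rfl | ha
  · simp
  · rw [Real.log_div ha (h ha)]; ring

lemma logsum (Y : Type) [Fintype Y] (p q : Y → ℝ) (B : Finset Y)
    (hp : ∀ y, 0 ≤ p y) (hq : ∀ y, 0 ≤ q y) (hac : ∀ y, q y = 0 → p y = 0) :
    (∑ y ∈ B, p y) * Real.log ((∑ y ∈ B, p y) / (∑ y ∈ B, q y)) ≤
      ∑ y ∈ B, p y * Real.log (p y / q y) := by
  set A := ∑ y ∈ B, p y with hA
  set C := ∑ y ∈ B, q y with hC
  have hA0 : 0 ≤ A := Finset.sum_nonneg fun y _ => hp y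
  have hC0 : 0 ≤ C := Finset.sum_nonneg fun y _ => hq y
  rcases eq_or_lt_of_le hC0 with hC' | hC'
  · have hq0 : ∀ y ∈ B, q y = 0 :=
      (Finset.sum_eq_zero_iff_of_nonneg (fun y _ => hq y)).mp hC'.symm
    have hp0 : ∀ y ∈ B, p y = 0 := fun y hy => hac y (hq0 y hy)
    have hA' : A = 0 := Finset.sum_eq_zero hp0
    rw [hA', zero_mul, Finset.sum_eq_zero (fun y hy => by rw [hp0 y hy, zero_mul])]
  · have key : ∀ y ∈ B, p y * Real.log (A / C) + p y - q y * (A / C)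
        ≤ p y * Real.log (p y / q y) := by
      intro y hy
      rcases eq_or_lt_of_le (hp y) with hp' | hp'
      · rw [← hp']
        simp only [zero_mul, zero_add, zero_sub, neg_nonpos]
        have : 0 ≤ A / C := by positivity
        nlinarith [hq y]
      · have hqy : 0 < q y := by
          rcases eq_or_lt_of_le (hq y) with h' | h'
          · exact absurd (hac y h'.symm) hp'.ne'
          · exact h'
        have hAy : 0 < A := lt_of_lt_of_le hp' (Finset.single_le_sum (fun y _ => hp y) hy)
        have hr : 0 < (p y * C)/(q y * A) := by positivity
        have hlog := log_ge_one_sub_inv hr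
        have e1 : Real.log ((p y * C)/(q y * A)) = Real.log (p y / q y) - Real.log (A / C) := by
          rw [Real.log_div (by positivity) (by positivity), Real.log_mul hp'.ne' hC'.ne',
              Real.log_mul hqy.ne' hAy.ne', Real.log_div hp'.ne' hqy.ne',
              Real.log_div hAy.ne' hC'.ne']
          ring
        have e2 : ((p y * C)/(q y * A))⁻¹ = (q y * A)/(p y * C) := by rw [inv_div]
        rw [e1, e2] at hlog
        have h4 := mul_le_mul_of_nonneg_left hlog (hp y)
        have e3 : p y * ((q y * A)/(p y * C)) = q y * (A / C) := by
          field_simp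
        nlinarith [h4, e3]
    have hsum := Finset.sum_le_sum key
    have e5 : ∑ y ∈ B, (p y * Real.log (A / C) + p y - q y * (A / C))
        = A * Real.log (A / C) + A - C * (A / C) := by
      rw [Finset.sum_sub_distrib, Finset.sum_add_distrib, ← Finset.sum_mul, ← Finset.sum_mul]
    have e6 : C * (A / C) = A := by
      rw [mul_comm, div_mul_cancel₀ _ hC'.ne']
    rw [e5, e6] at hsum
    linarith

lemma pinsker_pmf {Y : Type} [Fintype Y] [DecidableEq Y] (p q : Y → ℝ)
    (hp0 : ∀ y, 0 ≤ p y) (hq0 : ∀ y, 0 ≤ q y)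
    (hp1 : ∑ y, p y = 1) (hq1 : ∑ y, q y = 1) (hac : ∀ y, q y = 0 → p y = 0)
    (B : Finset Y) :
    2 * (∑ y ∈ B, (p y - q y))^2 ≤ ∑ y, p y * Real.log (p y / q y) := by
  set a := ∑ y ∈ B, p y with ha
  set b := ∑ y ∈ B, q y with hb
  have hpc : ∑ y ∈ Bᶜ, p y = 1 - a := by
    have := Finset.sum_add_sum_compl B p
    rw [hp1] at this; linarith
  have hqc : ∑ y ∈ Bᶜ, q y = 1 - b := by
    have := Finset.sum_add_sum_compl B q
    rw [hq1] at this; linarith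
  have ha0 : 0 ≤ a := Finset.sum_nonneg fun y _ => hp0 y
  have hb0 : 0 ≤ b := Finset.sum_nonneg fun y _ => hq0 y
  have ha1 : a ≤ 1 := by
    have : 0 ≤ ∑ y ∈ Bᶜ, p y := Finset.sum_nonneg fun y _ => hp0 y
    linarith [hpc]
  have hb1 : b ≤ 1 := by
    have : 0 ≤ ∑ y ∈ Bᶜ, q y := Finset.sum_nonneg fun y _ => hq0 y
    linarith [hqc]
  have hzero : ∀ (s : Finset Y), ∑ y ∈ s, q y = 0 → ∑ y ∈ s, p y = 0 := by
    intro s hs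
    apply Finset.sum_eq_zero
    intro y hy
    exact hac y ((Finset.sum_eq_zero_iff_of_nonneg (fun y _ => hq0 y)).mp hs y hy)
  have h0 : b = 0 → a = 0 := fun h => hzero B h
  have h1 : b = 1 → a = 1 := by
    intro h
    have : ∑ y ∈ Bᶜ, q y = 0 := by rw [hqc, h]; ring
    have := hzero Bᶜ this
    rw [hpc] at this; linarith
  have hbin := pinsker_binary a b ha0 ha1 hb0 hb1 h0 h1
  have hl1 := logsum Y p q B hp0 hq0 hac
  have hl2 := logsum Y p q Bᶜ hp0 hq0 hac
  rw [hpc, hqc] at hl2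
  rw [mul_log_div_eq a b (fun h => fun h' => h (h0 h'))] at hl1
  rw [mul_log_div_eq (1-a) (1-b) (fun h => fun h' => by
    have : b = 1 := by linarith [sub_eq_zero.mp h']
    exact h (by rw [h1 this]; ring))] at hl2
  have hsplit := Finset.sum_add_sum_compl B (fun y => p y * Real.log (p y / q y))
  have hab : ∑ y ∈ B, (p y - q y) = a - b := Finset.sum_sub_distrib _ _
  rw [hab]
  nlinarith [hbin, hl1, hl2, hsplit]

end Aux

/-- (Pinsker-type bound.) For a surjective deterministic aggregation `g`,
with `R = P·W` and `Q` the transition matrix of the best Markov approximation of `Y`, for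
every `x` and every `B ⊆ Y`:
`|∑_{y∈B} (R_{x→y} − Q_{g(x)→y})| ≤ sqrt( ln 2 · C_L(X,g) / (2 · min_x μ_x) )`. -/
theorem pinsker_bound_for_aggregation
    {X Y : Type} [Fintype X] [Fintype Y] [Nonempty X] [Nonempty Y]
    [DecidableEq X] [DecidableEq Y]
    (μ : X → ℝ) (P : X → X → ℝ) (g : X → Y) (hg : Function.Surjective g)
    (hμ0 : ∀ x, 0 ≤ μ x) (hμ1 : ∑ x, μ x = 1)
    (hP0 : ∀ x x', 0 ≤ P x x') (hP1 : ∀ x, ∑ x', P x x' = 1)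
    (hinv : ∀ x', ∑ x, μ x * P x x' = μ x')
    (hirr : IrreducibleAperiodic (Matrix.of fun a b => P a b))
    (hμpos : ∀ x, 0 < μ x)
    (Q : Y → Y → ℝ)
    (hQ : ∀ y y', Q y y' * nuDist μ (detW g) y = jointYY μ P (detW g) (y, y')) :
    ∀ (x : X) (B : Finset Y),
      |∑ y ∈ B, (Rmat P g x y - Q (g x) y)| ≤
        Real.sqrt (Real.log 2 * CL μ P (detW g) /
          (2 * Finset.univ.inf' Finset.univ_nonempty μ)) := by
  classical
  intro x B
  set W := detW g with hW
  set R := Rmat P g with hRdef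
  set ν := nuDist μ W with hνdef
  have hlog2 : (0:ℝ) < Real.log 2 := Real.log_pos (by norm_num)
  -- basic facts about ν, R, Q
  have hνe : ∀ y, ν y = ∑ x', if g x' = y then μ x' else 0 := by
    intro y
    simp [hνdef, nuDist, hW, detW, mul_ite]
  have hνpos : ∀ y, 0 < ν y := by
    intro y
    obtain ⟨x0, hx0⟩ := hg y
    rw [hνe]
    refine Finset.sum_pos' (fun i _ => by split_ifs; exacts [hμ0 i, le_refl 0]) ⟨x0, Finset.mem_univ _, ?_⟩
    simp [hx0, hμpos x0]
  have hR0 : ∀ x' y, 0 ≤ R x' y := by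
    intro x' y
    apply Finset.sum_nonneg
    intro i _
    split_ifs
    exacts [hP0 x' i, le_refl 0]
  have hR1 : ∀ x', ∑ y, R x' y = 1 := by
    intro x'
    rw [hRdef]
    unfold Rmat
    rw [Finset.sum_comm]
    simp [hP1 x']
  have hJ : ∀ y y', jointYY μ P W (y, y') = ∑ x', if g x' = y then μ x' * R x' y' else 0 := by
    intro y y'
    unfold jointYY
    apply Finset.sum_congr rfl
    intro x' _
    rw [hRdef]
    unfold Rmat
    simp only [hW, detW, Finset.mul_sum, mul_ite, ite_mul, one_mul, zero_mul, mul_one, mul_zero]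
    split_ifs with h
    · apply Finset.sum_congr rfl
      intro i _
      split_ifs <;> simp
    · apply Finset.sum_eq_zero
      intro i _
      split_ifs <;> simp
  have hJ0 : ∀ y y', 0 ≤ jointYY μ P W (y, y') := by
    intro y y'
    rw [hJ]
    apply Finset.sum_nonneg
    intro i _
    split_ifs
    exacts [mul_nonneg (hμ0 i) (hR0 i y'), le_refl 0]
  have hQ0 : ∀ y y', 0 ≤ Q y y' := by
    intro y y'
    have h := hQ y y'
    have h2 := hJ0 y y'
    have h3 := hνpos y
    nlinarith
  have hJsum : ∀ y, ∑ y', jointYY μ P W (y, y') = ν y := by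
    intro y
    have : ∀ y', jointYY μ P W (y, y') = ∑ x', if g x' = y then μ x' * R x' y' else 0 :=
      fun y' => hJ y y'
    rw [Finset.sum_congr rfl (fun y' _ => this y'), Finset.sum_comm, hνe]
    apply Finset.sum_congr rfl
    intro x' _
    split_ifs with h
    · rw [← Finset.mul_sum, hR1, mul_one]
    · simp
  have hQ1 : ∀ y, ∑ y', Q y y' = 1 := by
    intro y
    have h : (∑ y', Q y y') * ν y = ν y := by
      rw [Finset.sum_mul]
      rw [Finset.sum_congr rfl (fun y' _ => hQ y y')]
      exact hJsum y
    have h3 := hνpos y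
    have := mul_right_cancel₀ h3.ne' (h.trans (one_mul (ν y)).symm)
    exact this
  have habs : ∀ x' y, 0 < R x' y → 0 < Q (g x') y := by
    intro x' y hRy
    have hmem : μ x' * R x' y ≤ jointYY μ P W (g x', y) := by
      rw [hJ]
      have : (if g x' = g x' then μ x' * R x' y else 0) ≤ _ :=
        Finset.single_le_sum (f := fun i => if g i = g x' then μ i * R i y else 0)
          (fun i _ => by
            show (0:ℝ) ≤ if g i = g x' then μ i * R i y else 0
            split_ifs; exacts [mul_nonneg (hμ0 i) (hR0 i y), le_refl 0])
          (Finset.mem_univ x')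
      simpa using this
    have h1 : 0 < jointYY μ P W (g x', y) := lt_of_lt_of_le (mul_pos (hμpos x') hRy) hmem
    have h2 := hQ (g x') y
    have h3 := hνpos (g x')
    nlinarith
  -- pointwise log lemma
  have logb_mul_self : ∀ u v : ℝ,
      (u*v) * Real.logb 2 (u*v) = (u*v) * Real.logb 2 u + (u*v) * Real.logb 2 v := by
    intro u v
    rcases eq_or_ne u 0 with rfl | hu
    · simp
    rcases eq_or_ne v 0 with rfl | hv
    · simp
    rw [Real.logb_mul hu hv]
    ring
  -- H(Y2|X1)
  have e1 : ∀ x' y, jointX1Y2 μ P W (x', y) = μ x' * R x' y := by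
    intro x' y
    unfold jointX1Y2
    rw [hRdef]
    unfold Rmat
    simp only [hW, detW, Finset.mul_sum, mul_ite, mul_one, mul_zero]
  have key1 : HY2gX1 μ P W = - ∑ x', μ x' * ∑ y, R x' y * Real.logb 2 (R x' y) := by
    unfold HY2gX1 ent
    rw [Fintype.sum_prod_type]
    have inner : ∀ x', ∑ y, jointX1Y2 μ P W (x', y) * Real.logb 2 (jointX1Y2 μ P W (x', y))
        = μ x' * Real.logb 2 (μ x') + μ x' * ∑ y, R x' y * Real.logb 2 (R x' y) := by
      intro x'
      have hpt : ∀ y, jointX1Y2 μ P W (x', y) * Real.logb 2 (jointX1Y2 μ P W (x', y))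
          = (μ x' * Real.logb 2 (μ x')) * R x' y + μ x' * (R x' y * Real.logb 2 (R x' y)) := by
        intro y
        rw [e1 x' y]
        have := logb_mul_self (μ x') (R x' y)
        nlinarith [this]
      rw [Finset.sum_congr rfl (fun y _ => hpt y), Finset.sum_add_distrib,
        ← Finset.mul_sum, ← Finset.mul_sum, hR1, mul_one]
    rw [Finset.sum_congr rfl (fun x' _ => inner x'), Finset.sum_add_distrib]
    ring
  -- H(Y2|Y1)
  have eJ : ∀ y y', jointYY μ P W (y, y') = ν y * Q y y' := by
    intro y y'
    rw [← hQ y y', mul_comm]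
  have key2 : HY2gY1 μ P W = - ∑ y, ∑ y', ν y * (Q y y' * Real.logb 2 (Q y y')) := by
    unfold HY2gY1 ent
    rw [Fintype.sum_prod_type]
    have inner : ∀ y, ∑ y', jointYY μ P W (y, y') * Real.logb 2 (jointYY μ P W (y, y'))
        = ν y * Real.logb 2 (ν y) + ∑ y', ν y * (Q y y' * Real.logb 2 (Q y y')) := by
      intro y
      have hpt : ∀ y', jointYY μ P W (y, y') * Real.logb 2 (jointYY μ P W (y, y'))
          = (ν y * Real.logb 2 (ν y)) * Q y y' + ν y * (Q y y' * Real.logb 2 (Q y y')) := by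
        intro y'
        rw [eJ y y']
        have := logb_mul_self (ν y) (Q y y')
        nlinarith [this]
      rw [Finset.sum_congr rfl (fun y' _ => hpt y'), Finset.sum_add_distrib,
        ← Finset.mul_sum, hQ1, mul_one]
    rw [Finset.sum_congr rfl (fun y _ => inner y), Finset.sum_add_distrib]
    ring
  -- rewrite the Y-sum as an X-sum
  have key3 : ∑ y, ∑ y', ν y * (Q y y' * Real.logb 2 (Q y y'))
      = ∑ x', μ x' * ∑ y', R x' y' * Real.logb 2 (Q (g x') y') := by
    have hpt : ∀ y y', ν y * (Q y y' * Real.logb 2 (Q y y'))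
        = ∑ x', if g x' = y then μ x' * R x' y' * Real.logb 2 (Q y y') else 0 := by
      intro y y'
      have : ν y * (Q y y' * Real.logb 2 (Q y y'))
          = jointYY μ P W (y, y') * Real.logb 2 (Q y y') := by
        rw [eJ y y']
        ring
      rw [this, hJ, Finset.sum_mul]
      apply Finset.sum_congr rfl
      intro x' _
      split_ifs <;> simp
    rw [Finset.sum_congr rfl (fun y _ => Finset.sum_congr rfl (fun y' _ => hpt y y'))]
    rw [Finset.sum_comm]
    have swap : ∀ y', ∑ y, ∑ x', (if g x' = y then μ x' * R x' y' * Real.logb 2 (Q y y') else 0)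
        = ∑ x', μ x' * R x' y' * Real.logb 2 (Q (g x') y') := by
      intro y'
      rw [Finset.sum_comm]
      apply Finset.sum_congr rfl
      intro x' _
      simp
    rw [Finset.sum_congr rfl (fun y' _ => swap y'), Finset.sum_comm]
    apply Finset.sum_congr rfl
    intro x' _
    rw [Finset.mul_sum]
    apply Finset.sum_congr rfl
    intro y' _
    ring
  -- the KL identity
  have keyCL : CL μ P W = ∑ x', μ x' * klDiv2 (R x') (fun y => Q (g x') y) := by
    have hkl : ∀ x', klDiv2 (R x') (fun y => Q (g x') y)
        = (∑ y, R x' y * Real.logb 2 (R x' y)) - ∑ y, R x' y * Real.logb 2 (Q (g x') y) := by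
      intro x'
      unfold klDiv2
      rw [← Finset.sum_sub_distrib]
      apply Finset.sum_congr rfl
      intro y _
      rcases eq_or_lt_of_le (hR0 x' y) with h | h
      · rw [← h]
        simp
      · have hq := habs x' y h
        rw [Real.logb_div h.ne' hq.ne']
        ring
    unfold CL
    rw [key1, key2, key3]
    have hstep : ∑ x', μ x' * klDiv2 (R x') (fun y => Q (g x') y)
        = ∑ x', (μ x' * ∑ y, R x' y * Real.logb 2 (R x' y)
            - μ x' * ∑ y, R x' y * Real.logb 2 (Q (g x') y)) :=
      Finset.sum_congr rfl (fun x' _ => by rw [hkl x']; ring)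
    rw [hstep, Finset.sum_sub_distrib]
    ring
  -- natural-log KL
  have klnat : ∀ x', Real.log 2 * klDiv2 (R x') (fun y => Q (g x') y)
      = ∑ y, R x' y * Real.log (R x' y / Q (g x') y) := by
    intro x'
    unfold klDiv2
    rw [Finset.mul_sum]
    apply Finset.sum_congr rfl
    intro y _
    rw [Real.logb]
    field_simp
  have hCLnat : Real.log 2 * CL μ P W
      = ∑ x', μ x' * ∑ y, R x' y * Real.log (R x' y / Q (g x') y) := by
    rw [keyCL, Finset.mul_sum]
    apply Finset.sum_congr rfl
    intro x' _
    rw [← klnat x']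
    ring
  -- Pinsker per row
  have hacx : ∀ x' y, Q (g x') y = 0 → R x' y = 0 := by
    intro x' y hq
    by_contra h
    have := habs x' y (lt_of_le_of_ne (hR0 x' y) (Ne.symm h))
    rw [hq] at this
    exact lt_irrefl 0 this
  have hknn : ∀ x', 0 ≤ ∑ y, R x' y * Real.log (R x' y / Q (g x') y) := by
    intro x'
    have := pinsker_pmf (R x') (fun y => Q (g x') y) (hR0 x') (fun y => hQ0 (g x') y)
      (hR1 x') (hQ1 (g x')) (hacx x') ∅
    simpa using this
  have hx := pinsker_pmf (R x) (fun y => Q (g x) y) (hR0 x) (fun y => hQ0 (g x) y)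
    (hR1 x) (hQ1 (g x)) (hacx x) B
  have hge : μ x * ∑ y, R x y * Real.log (R x y / Q (g x) y) ≤ Real.log 2 * CL μ P W := by
    rw [hCLnat]
    exact Finset.single_le_sum (fun i _ => mul_nonneg (hμ0 i) (hknn i)) (Finset.mem_univ x)
  set m := Finset.univ.inf' Finset.univ_nonempty μ with hm
  have hmpos : 0 < m := by
    rw [hm, Finset.lt_inf'_iff]
    intro i _
    exact hμpos i
  have hmle : m ≤ μ x := Finset.inf'_le μ (Finset.mem_univ x)
  have hd2 : (∑ y ∈ B, (R x y - Q (g x) y))^2 ≤ Real.log 2 * CL μ P W / (2 * m) := by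
    rw [le_div_iff₀ (by positivity)]
    nlinarith [hx, hge, hknn x, hmpos, hmle, hμpos x]
  calc |∑ y ∈ B, (R x y - Q (g x) y)|
      = Real.sqrt ((∑ y ∈ B, (R x y - Q (g x) y))^2) := (Real.sqrt_sq_eq_abs _).symm
    _ ≤ Real.sqrt (Real.log 2 * CL μ P W / (2 * m)) := Real.sqrt_le_sqrt hd2
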